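/- arXiv:2102.09511 — 3 statements merged into one kernel-verified Lean document; each statement's English description precedes it below -/
import Mathlib

section
/- If a sequence (a_n) of rationals satisfies a_0 = a_1 = 1 and the functional equation (∑ a_n z^n)^2 = ∑ binomial(2n,n) a_n z^n as formal power series, then a_n = 1/(n!)^2 for all n. -/
open Finset

lemma bessel_sum_eq (n : ℕ) :
    ∑ k ∈ range (n + 1), (1 / ((k.factorial : ℚ) ^ 2)) * (1 / (((n - k).factorial : ℚ) ^ 2))
      = ((2 * n).choose n : ℚ) * (1 / ((n.factorial : ℚ) ^ 2)) := by
  have h : ∀ k ∈ range (n + 1),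
      (1 / ((k.factorial : ℚ) ^ 2)) * (1 / (((n - k).factorial : ℚ) ^ 2))
        = ((n.choose k : ℚ)) ^ 2 * (1 / ((n.factorial : ℚ) ^ 2)) := by
    intro k hk
    rw [mem_range, Nat.lt_succ_iff] at hk
    have hfac : (n.choose k : ℚ) * (k.factorial : ℚ) * ((n - k).factorial : ℚ)
        = (n.factorial : ℚ) := by
      exact_mod_cast congrArg (Nat.cast : ℕ → ℚ)
        (Nat.choose_mul_factorial_mul_factorial hk)
    have hk0 : (k.factorial : ℚ) ≠ 0 := Nat.cast_ne_zero.mpr k.factorial_ne_zero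
    have hnk0 : ((n - k).factorial : ℚ) ≠ 0 := Nat.cast_ne_zero.mpr (n - k).factorial_ne_zero
    have hn0 : (n.factorial : ℚ) ≠ 0 := Nat.cast_ne_zero.mpr n.factorial_ne_zero
    field_simp
    nlinarith [hfac]
  rw [Finset.sum_congr rfl h, ← Finset.sum_mul]
  congr 1
  have hv := Nat.add_choose_eq n n n
  rw [Finset.Nat.sum_antidiagonal_eq_sum_range_succ_mk] at hv
  have : ((2 * n).choose n : ℚ) = ((∑ k ∈ range (n + 1), n.choose k * n.choose (n - k) : ℕ) : ℚ) := by
    rw [← hv]; norm_cast; ring_nf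
  rw [this]
  push_cast
  apply Finset.sum_congr rfl
  intro k hk
  rw [mem_range, Nat.lt_succ_iff] at hk
  rw [Nat.choose_symm hk, sq]

theorem clausen_functional_equation_determines_bessel (a : ℕ → ℚ)
    (h0 : a 0 = 1) (h1 : a 1 = 1)
    (heq : (PowerSeries.mk a) ^ 2 =
      PowerSeries.mk (fun n : ℕ => (((2 * n).choose n : ℚ)) * a n)) :
    ∀ n : ℕ, a n = 1 / ((n.factorial : ℚ) ^ 2) := by
  set b : ℕ → ℚ := fun n => 1 / ((n.factorial : ℚ) ^ 2) with hb
  have hcoeff : ∀ n : ℕ, ∑ k ∈ range (n + 1), a k * a (n - k)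
      = ((2 * n).choose n : ℚ) * a n := by
    intro n
    have := congrArg (PowerSeries.coeff (R := ℚ) n) heq
    rw [sq, PowerSeries.coeff_mul, PowerSeries.coeff_mk,
      Finset.Nat.sum_antidiagonal_eq_sum_range_succ_mk] at this
    simpa [PowerSeries.coeff_mk] using this
  intro n
  induction n using Nat.strong_induction_on with
  | _ n ih =>
    match n, ih with
    | 0, _ => simpa using h0
    | 1, _ => simpa using h1
    | (m + 2), ih =>
      set n := m + 2 with hn
      have hC2 : ((2 * n).choose n : ℚ) - 2 ≠ 0 := by
        have h4 : 4 ≤ (2 * n).choose n := by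
          calc 4 ≤ 2 * n := by omega
          _ = (2 * n).choose 1 := (Nat.choose_one_right _).symm
          _ ≤ (2 * n).choose n := Nat.choose_le_centralBinom 1 n
        have : (4 : ℚ) ≤ ((2 * n).choose n : ℚ) := by exact_mod_cast h4
        linarith
      have hmid : ∀ k ∈ Ico 1 n, a k * a (n - k) = b k * b (n - k) := by
        intro k hk
        rw [mem_Ico] at hk
        rw [ih k (by omega), ih (n - k) (by omega)]
      have hsplit : ∀ c : ℕ → ℚ, c 0 = 1 →
          ∑ k ∈ range (n + 1), c k * c (n - k)
            = c n + (∑ k ∈ Ico 1 n, c k * c (n - k)) + c n := by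
        intro c hc0
        have h1 : range (n + 1) = insert 0 (Ico 1 (n + 1)) := by
          ext x; simp [Finset.mem_insert, Finset.mem_Ico, Finset.mem_range]; omega
        have h2 : Ico 1 (n + 1) = insert n (Ico 1 n) := by
          ext x; simp [Finset.mem_insert, Finset.mem_Ico]; omega
        rw [h1, Finset.sum_insert (by simp), h2,
          Finset.sum_insert (by simp), hc0, Nat.sub_self, Nat.sub_zero, hc0]
        ring
      have ha0 : a 0 = 1 := h0
      have hb0 : b 0 = 1 := by simp [hb]
      have key_a : ((2 * n).choose n : ℚ) * a n
          = a n + (∑ k ∈ Ico 1 n, b k * b (n - k)) + a n := by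
        rw [← hcoeff n, hsplit a ha0, Finset.sum_congr rfl hmid]
      have key_b : ((2 * n).choose n : ℚ) * b n
          = b n + (∑ k ∈ Ico 1 n, b k * b (n - k)) + b n := by
        rw [← bessel_sum_eq n, hsplit b hb0]
      have : (((2 * n).choose n : ℚ) - 2) * a n = (((2 * n).choose n : ℚ) - 2) * b n := by
        linarith
      exact mul_left_cancel₀ hC2 this
end

section
/- Let b_n(λ) be defined by b_0 = 1, b_{n+1}(λ) = (1/(B(n+1)^2))((λ - A n(n+1)) b_n(λ) - n^2 b_{n-1}(λ)), with B ≠ 0. Then φ_λ(t) = ∑ b_n(λ) t^n satisfies the D2 equation (f(t) φ'' + f'(t) φ' + t φ) = λ φ as formal power series in t, where f(t) = t^3 + A t^2 + B t. -/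
open PowerSeries

lemma coeff_X_mul' {R} [CommRing R] (p : R⟦X⟧) (d : ℕ) :
    coeff d (X * p) = if 1 ≤ d then coeff (d - 1) p else 0 := by
  rw [← pow_one (X : R⟦X⟧), coeff_X_pow_mul']

lemma derivativeFun_eq_derivative' {R} [CommRing R] (f : R⟦X⟧) :
    derivativeFun f = d⁄dX R f := rfl

theorem d2_equation_for_phi (A B lam : ℂ) (hB : B ≠ 0) (c : ℕ → ℂ) (hc0 : c 0 = 1)
    (hrec : ∀ n : ℕ, c (n + 1) =
      (B * ((n : ℂ) + 1) ^ 2)⁻¹ *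
        ((lam - A * (n : ℂ) * ((n : ℂ) + 1)) * c n - (n : ℂ) ^ 2 * c (n - 1))) :
    (X ^ 3 + C A * X ^ 2 + C B * X) *
        derivativeFun (derivativeFun (PowerSeries.mk c)) +
      (3 * X ^ 2 + C (2 * A) * X + C B) * derivativeFun (PowerSeries.mk c) +
      X * PowerSeries.mk c = C lam * PowerSeries.mk c := by
  have h3 : (3 : ℂ⟦X⟧) = C 3 := (map_ofNat C 3).symm
  have hrec2 : ∀ n : ℕ, B * ((n : ℂ) + 1) ^ 2 * c (n + 1) =
      (lam - A * (n : ℂ) * ((n : ℂ) + 1)) * c n - (n : ℂ) ^ 2 * c (n - 1) := by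
    intro n
    have hn : ((n : ℂ) + 1) ≠ 0 := Nat.cast_add_one_ne_zero n
    rw [hrec n]
    field_simp
  ext n
  rw [h3]
  simp only [add_mul, mul_assoc, map_add, coeff_C_mul, coeff_X_pow_mul', coeff_X_mul',
    derivativeFun_eq_derivative', coeff_derivative, coeff_mk]
  rcases n with _ | _ | _ | k
  · have h := hrec2 0
    norm_num at h ⊢
    linear_combination h
  · have h := hrec2 1
    norm_num at h ⊢
    linear_combination h
  · have h := hrec2 2
    norm_num at h ⊢
    linear_combination h
  · have h := hrec2 (k + 1 + 1 + 1)
    simp only [Nat.add_sub_cancel] at h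
    push_cast at h
    simp only [show 3 ≤ k + 1 + 1 + 1 by omega, show 2 ≤ k + 1 + 1 + 1 by omega,
      show 1 ≤ k + 1 + 1 + 1 by omega, if_pos, Nat.add_sub_cancel,
      show k + 1 + 1 + 1 - 3 = k from rfl, show k + 1 + 1 + 1 - 2 = k + 1 from rfl,
      show k + 1 + 1 + 1 - 1 = k + 1 + 1 from rfl]
    push_cast
    linear_combination h
end

section
/- The kernel K(x,y,z) = B z^{-1} P(x, y, B z^{-1})^{-1/2}, viewed as an element of z^{-1}ℂ[z^{-1}][[x,y]] where P(x,y,z) = (B - xy - yz - xz)^2 - 4xyz(x+y+z+A), satisfies L_x K = L_y K, where L is the D2 operator L = f(t)∂_t² + f'(t)∂_t + t with f(t) = t³ + At² + Bt. -/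
set_option maxHeartbeats 4000000

/-- Formal partial derivative in the `i`-th variable of a multivariate power series. -/
noncomputable def pderivSeries {R : Type*} [CommRing R] (i : Fin 2)
    (f : MvPowerSeries (Fin 2) R) : MvPowerSeries (Fin 2) R :=
  fun e => (e i + 1 : ℕ) • f (e + Finsupp.single i 1)

/-- The D2 operator `L = f(t) ∂² + f'(t) ∂ + t` acting in the `i`-th variable,
with `f(t) = t³ + A t² + B t`. -/
noncomputable def D2op {R : Type*} [CommRing R] (A B : R) (i : Fin 2)
    (K : MvPowerSeries (Fin 2) R) : MvPowerSeries (Fin 2) R :=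
  (MvPowerSeries.X i ^ 3 + (MvPowerSeries.C : R →+* MvPowerSeries (Fin 2) R) A * MvPowerSeries.X i ^ 2
      + (MvPowerSeries.C : R →+* MvPowerSeries (Fin 2) R) B * MvPowerSeries.X i) *
    pderivSeries i (pderivSeries i K) +
  (3 * MvPowerSeries.X i ^ 2 + (MvPowerSeries.C : R →+* MvPowerSeries (Fin 2) R) (2 * A) * MvPowerSeries.X i
      + (MvPowerSeries.C : R →+* MvPowerSeries (Fin 2) R) B) * pderivSeries i K +
  MvPowerSeries.X i * K

namespace D2aux

open MvPowerSeries

variable {R : Type*} [CommRing R]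

lemma coeff_pderiv (i : Fin 2) (f : MvPowerSeries (Fin 2) R) (e : Fin 2 →₀ ℕ) :
    (MvPowerSeries.coeff e) (pderivSeries i f) =
      (e i + 1) • (MvPowerSeries.coeff (e + Finsupp.single i 1)) f := rfl

lemma pderiv_add (i : Fin 2) (f g : MvPowerSeries (Fin 2) R) :
    pderivSeries i (f + g) = pderivSeries i f + pderivSeries i g := by
  ext e
  simp [coeff_pderiv, smul_add]

lemma sum_shift (i : Fin 2) (e : Fin 2 →₀ ℕ)
    (F : (Fin 2 →₀ ℕ) → (Fin 2 →₀ ℕ) → R) :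
    ∑ p ∈ (Finset.HasAntidiagonal.antidiagonal (e + Finsupp.single i 1) :
        Finset ((Fin 2 →₀ ℕ) × (Fin 2 →₀ ℕ))), (p.1 i) • F p.1 p.2
      = ∑ p ∈ (Finset.HasAntidiagonal.antidiagonal e : Finset ((Fin 2 →₀ ℕ) × (Fin 2 →₀ ℕ))),
          ((p.1 i) + 1) • F (p.1 + Finsupp.single i 1) p.2 := by
  classical
  set δ : Fin 2 →₀ ℕ := Finsupp.single i 1 with hδ
  have hinj : Function.Injective
      (fun p : (Fin 2 →₀ ℕ) × (Fin 2 →₀ ℕ) => (p.1 + δ, p.2)) := by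
    intro a b hab
    simp only [Prod.mk.injEq, add_left_inj] at hab
    exact Prod.ext hab.1 hab.2
  rw [show (∑ p ∈ Finset.HasAntidiagonal.antidiagonal e, ((p.1 i) + 1) • F (p.1 + δ) p.2)
      = ∑ p ∈ (Finset.HasAntidiagonal.antidiagonal e).map ⟨_, hinj⟩, (p.1 i) • F p.1 p.2 by
    rw [Finset.sum_map]
    refine Finset.sum_congr rfl fun p hp => ?_
    simp [hδ, Finsupp.add_apply, Finsupp.single_apply]]
  refine (Finset.sum_subset ?_ ?_).symm
  · intro p hp
    simp only [Finset.mem_map, Finset.HasAntidiagonal.mem_antidiagonal, Function.Embedding.coeFn_mk] at hp ⊢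
    obtain ⟨a, ha, rfl⟩ := hp
    rw [add_right_comm, ha]
  · intro p hp hnp
    simp only [Finset.mem_map, Finset.HasAntidiagonal.mem_antidiagonal, Function.Embedding.coeFn_mk] at hp hnp
    by_cases h0 : p.1 i = 0
    · simp [h0]
    · exfalso
      apply hnp
      refine ⟨(p.1 - δ, p.2), ?_, ?_⟩
      · have h1 : p.1 - δ + p.2 + δ = e + δ := by
          rw [add_right_comm, tsub_add_cancel_of_le, hp]
          rw [hδ, Finsupp.single_le_iff]
          omega
        exact add_right_cancel h1
      · have : p.1 - δ + δ = p.1 := by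
          rw [tsub_add_cancel_of_le]
          rw [hδ, Finsupp.single_le_iff]; omega
        simp [this]

lemma pderiv_mul (i : Fin 2) (f g : MvPowerSeries (Fin 2) R) :
    pderivSeries i (f * g) = pderivSeries i f * g + f * pderivSeries i g := by
  classical
  ext e
  set δ : Fin 2 →₀ ℕ := Finsupp.single i 1 with hδ
  rw [map_add, coeff_pderiv, MvPowerSeries.coeff_mul, MvPowerSeries.coeff_mul,
    MvPowerSeries.coeff_mul, Finset.smul_sum]
  have step1 : ∀ p ∈ Finset.HasAntidiagonal.antidiagonal (e + δ),
      (e i + 1) • ((coeff p.1) f * (coeff p.2) g)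
        = (p.1 i) • ((coeff p.1) f * (coeff p.2) g)
          + (p.2 i) • ((coeff p.1) f * (coeff p.2) g) := by
    intro p hp
    rw [Finset.HasAntidiagonal.mem_antidiagonal] at hp
    have : p.1 i + p.2 i = e i + 1 := by
      have := DFunLike.congr_fun hp i
      simpa [hδ, Finsupp.add_apply, Finsupp.single_apply] using this
    rw [← this, add_smul]
  rw [Finset.sum_congr rfl step1, Finset.sum_add_distrib]
  congr 1
  · rw [sum_shift i e (fun a b => (coeff a) f * (coeff b) g)]
    refine Finset.sum_congr rfl fun p hp => ?_
    rw [coeff_pderiv, smul_mul_assoc]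
  · have hswap : (∑ p ∈ Finset.HasAntidiagonal.antidiagonal (e + δ),
        (p.2 i) • ((coeff p.1) f * (coeff p.2) g))
      = ∑ p ∈ Finset.HasAntidiagonal.antidiagonal (e + δ),
        (p.1 i) • ((coeff p.2) f * (coeff p.1) g) := by
      conv_lhs => rw [← Finset.HasAntidiagonal.map_swap_antidiagonal (n := e + δ)]
      rw [Finset.sum_map]
      simp only [Function.Embedding.coeFn_mk, Prod.fst_swap, Prod.snd_swap]
    rw [hswap, sum_shift i e (fun a b => (coeff b) f * (coeff a) g)]
    have hswap2 : (∑ p ∈ Finset.HasAntidiagonal.antidiagonal e,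
        ((p.1 i) + 1) • ((coeff p.2) f * (coeff (p.1 + δ)) g))
      = ∑ p ∈ Finset.HasAntidiagonal.antidiagonal e,
        ((p.2 i) + 1) • ((coeff p.1) f * (coeff (p.2 + δ)) g) := by
      conv_lhs => rw [← Finset.HasAntidiagonal.map_swap_antidiagonal (n := e)]
      rw [Finset.sum_map]
      simp only [Function.Embedding.coeFn_mk, Prod.fst_swap, Prod.snd_swap]
    rw [hswap2]
    refine Finset.sum_congr rfl fun p hp => ?_
    rw [coeff_pderiv, mul_smul_comm]

lemma pderiv_sq (i : Fin 2) (f : MvPowerSeries (Fin 2) R) :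
    pderivSeries i (f ^ 2) = 2 * f * pderivSeries i f := by
  rw [sq, pderiv_mul]; ring

lemma pderiv_neg (i : Fin 2) (f : MvPowerSeries (Fin 2) R) :
    pderivSeries i (-f) = -pderivSeries i f := by
  ext e; simp [coeff_pderiv]

lemma pderiv_sub (i : Fin 2) (f g : MvPowerSeries (Fin 2) R) :
    pderivSeries i (f - g) = pderivSeries i f - pderivSeries i g := by
  ext e; simp [coeff_pderiv, smul_sub]

lemma pderiv_C (i : Fin 2) (r : R) :
    pderivSeries i ((MvPowerSeries.C : R →+* MvPowerSeries (Fin 2) R) r) = 0 := by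
  ext e
  rw [coeff_pderiv, MvPowerSeries.coeff_C]
  have : ¬(e + Finsupp.single i 1 = 0) := by
    intro h
    have := DFunLike.congr_fun h i
    simp [Finsupp.add_apply, Finsupp.single_apply] at this
  simp [this]

lemma pderiv_one (i : Fin 2) : pderivSeries i (1 : MvPowerSeries (Fin 2) R) = 0 := by
  rw [← map_one ((MvPowerSeries.C : R →+* MvPowerSeries (Fin 2) R)), pderiv_C]

lemma pderiv_ofNat (i : Fin 2) (n : ℕ) [n.AtLeastTwo] :
    pderivSeries i (no_index (OfNat.ofNat n) : MvPowerSeries (Fin 2) R) = 0 := by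
  rw [← map_ofNat ((MvPowerSeries.C : R →+* MvPowerSeries (Fin 2) R)) n, pderiv_C]

lemma pderiv_X_self (i : Fin 2) :
    pderivSeries i (MvPowerSeries.X i : MvPowerSeries (Fin 2) R) = 1 := by
  ext e
  rw [coeff_pderiv, MvPowerSeries.coeff_X, MvPowerSeries.coeff_one]
  by_cases h : e = 0
  · subst h; simp
  · have h2 : ¬(e + Finsupp.single i 1 = Finsupp.single i 1) := by
      intro hh
      exact h (by simpa using add_right_cancel (hh.trans (zero_add _).symm))
    simp [h, h2]

lemma pderiv_X_ne (i j : Fin 2) (h : i ≠ j) :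
    pderivSeries i (MvPowerSeries.X j : MvPowerSeries (Fin 2) R) = 0 := by
  ext e
  rw [coeff_pderiv, MvPowerSeries.coeff_X]
  have h2 : ¬(e + Finsupp.single i 1 = Finsupp.single j 1) := by
    intro hh
    have := DFunLike.congr_fun hh i
    simp [Finsupp.add_apply, Finsupp.single_apply, h, (Ne.symm h)] at this
  simp [h2]

end D2aux

open D2aux in
/-- The kernel `K(x,y,z) = B z⁻¹ P(x,y,Bz⁻¹)^{-1/2}` satisfies `L_x K = L_y K`.
We work in `ℂ[z⁻¹][[x,y]]`, realized as `MvPowerSeries (Fin 2) (Polynomial ℂ)`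
with the polynomial variable `w = z⁻¹`, `x = X 0`, `y = X 1`.  The inverse square
root is encoded by any `u` with `u² · P(x,y,Bw) = 1`, and `K = (Bw) · u`. -/
theorem D2_kernel_symmetry (A B : ℂ)
    (u : MvPowerSeries (Fin 2) (Polynomial ℂ))
    (hu : u * u *
      (((MvPowerSeries.C : Polynomial ℂ →+* MvPowerSeries (Fin 2) (Polynomial ℂ)) (Polynomial.C B)
          - MvPowerSeries.X 0 * MvPowerSeries.X 1
          - MvPowerSeries.X 1 * (MvPowerSeries.C : Polynomial ℂ →+* MvPowerSeries (Fin 2) (Polynomial ℂ))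
              (Polynomial.C B * Polynomial.X)
          - MvPowerSeries.X 0 * (MvPowerSeries.C : Polynomial ℂ →+* MvPowerSeries (Fin 2) (Polynomial ℂ))
              (Polynomial.C B * Polynomial.X)) ^ 2
        - 4 * MvPowerSeries.X 0 * MvPowerSeries.X 1 *
            (MvPowerSeries.C : Polynomial ℂ →+* MvPowerSeries (Fin 2) (Polynomial ℂ)) (Polynomial.C B * Polynomial.X) *
            (MvPowerSeries.X 0 + MvPowerSeries.X 1
              + (MvPowerSeries.C : Polynomial ℂ →+* MvPowerSeries (Fin 2) (Polynomial ℂ)) (Polynomial.C B * Polynomial.X)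
              + (MvPowerSeries.C : Polynomial ℂ →+* MvPowerSeries (Fin 2) (Polynomial ℂ)) (Polynomial.C A))) = 1) :
    D2op (Polynomial.C A) (Polynomial.C B) 0
        ((MvPowerSeries.C : Polynomial ℂ →+* MvPowerSeries (Fin 2) (Polynomial ℂ)) (Polynomial.C B * Polynomial.X) * u) =
      D2op (Polynomial.C A) (Polynomial.C B) 1
        ((MvPowerSeries.C : Polynomial ℂ →+* MvPowerSeries (Fin 2) (Polynomial ℂ)) (Polynomial.C B * Polynomial.X) * u) := by
  classical
  have hu2 := hu
  simp only [map_mul] at hu2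
  set x : MvPowerSeries (Fin 2) (Polynomial ℂ) := MvPowerSeries.X 0 with hx
  set y : MvPowerSeries (Fin 2) (Polynomial ℂ) := MvPowerSeries.X 1 with hy
  set w : MvPowerSeries (Fin 2) (Polynomial ℂ) :=
    (MvPowerSeries.C : Polynomial ℂ →+* MvPowerSeries (Fin 2) (Polynomial ℂ)) Polynomial.X with hw
  set ka : MvPowerSeries (Fin 2) (Polynomial ℂ) :=
    (MvPowerSeries.C : Polynomial ℂ →+* MvPowerSeries (Fin 2) (Polynomial ℂ)) (Polynomial.C A) with hka
  set kb : MvPowerSeries (Fin 2) (Polynomial ℂ) :=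
    (MvPowerSeries.C : Polynomial ℂ →+* MvPowerSeries (Fin 2) (Polynomial ℂ)) (Polynomial.C B) with hkb
  set hh : MvPowerSeries (Fin 2) (Polynomial ℂ) :=
    (MvPowerSeries.C : Polynomial ℂ →+* MvPowerSeries (Fin 2) (Polynomial ℂ)) (Polynomial.C (1/2 : ℂ)) with hhh
  have h2 : hh + hh = 1 := by
    rw [hhh, ← map_add, ← map_add]
    norm_num
  have px00 : pderivSeries 0 x = 1 := by rw [hx]; exact pderiv_X_self 0
  have px01 : pderivSeries 0 y = 0 := by rw [hy]; exact pderiv_X_ne 0 1 (by decide)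
  have px10 : pderivSeries 1 x = 0 := by rw [hx]; exact pderiv_X_ne 1 0 (by decide)
  have px11 : pderivSeries 1 y = 1 := by rw [hy]; exact pderiv_X_self 1
  have pw0 : pderivSeries 0 w = 0 := by rw [hw]; exact pderiv_C 0 _
  have pw1 : pderivSeries 1 w = 0 := by rw [hw]; exact pderiv_C 1 _
  have pa0 : pderivSeries 0 ka = 0 := by rw [hka]; exact pderiv_C 0 _
  have pa1 : pderivSeries 1 ka = 0 := by rw [hka]; exact pderiv_C 1 _
  have pb0 : pderivSeries 0 kb = 0 := by rw [hkb]; exact pderiv_C 0 _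
  have pb1 : pderivSeries 1 kb = 0 := by rw [hkb]; exact pderiv_C 1 _
  have ph0 : pderivSeries 0 hh = 0 := by rw [hhh]; exact pderiv_C 0 _
  have ph1 : pderivSeries 1 hh = 0 := by rw [hhh]; exact pderiv_C 1 _
  have d0 := congrArg (pderivSeries 0) hu2
  have d1 := congrArg (pderivSeries 1) hu2
  simp only [pderiv_mul, pderiv_add, pderiv_sub, pderiv_neg, pderiv_sq, pderiv_one,
    pderiv_ofNat, px00, px01, px10, px11, pw0, pw1, pa0, pa1, pb0, pb1, ph0, ph1,
    mul_zero, zero_mul, add_zero, zero_add, mul_one, one_mul, neg_zero,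
    sub_zero, zero_sub] at d0 d1
  have e0 : pderivSeries 0 u = -(hh * u^3 * (2*(kb - x*y - y*(kb*w) - x*(kb*w))*(-(y+kb*w)) - 4*y*(kb*w)*(x+y+kb*w+ka) - 4*x*y*(kb*w))) := by
    linear_combination hh*u*d0 - 2*hh*(pderivSeries 0 u)*hu2 - (pderivSeries 0 u)*h2
  have e1 : pderivSeries 1 u = -(hh * u^3 * (2*(kb - x*y - y*(kb*w) - x*(kb*w))*(-(x+kb*w)) - 4*x*(kb*w)*(x+y+kb*w+ka) - 4*x*y*(kb*w))) := by
    linear_combination hh*u*d1 - 2*hh*(pderivSeries 1 u)*hu2 - (pderivSeries 1 u)*h2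
  have dd0 := congrArg (pderivSeries 0) e0
  have dd1 := congrArg (pderivSeries 1) e1
  simp only [pow_succ, pow_zero, one_mul] at dd0 dd1
  simp only [pderiv_mul, pderiv_add, pderiv_sub, pderiv_neg, pderiv_sq, pderiv_one,
    pderiv_ofNat, px00, px01, px10, px11, pw0, pw1, pa0, pa1, pb0, pb1, ph0, ph1,
    mul_zero, zero_mul, add_zero, zero_add, mul_one, one_mul, neg_zero,
    sub_zero, zero_sub] at dd0 dd1
  have e00 : pderivSeries 0 (pderivSeries 0 u)
      = 3*hh*hh*u^5*(2*(kb - x*y - y*(kb*w) - x*(kb*w))*(-(y+kb*w)) - 4*y*(kb*w)*(x+y+kb*w+ka) - 4*x*y*(kb*w))^2 - hh*u^3*(2*(y+kb*w)^2 - 8*y*(kb*w)) := by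
    linear_combination dd0 - 3*hh*u^2*(2*(kb - x*y - y*(kb*w) - x*(kb*w))*(-(y+kb*w)) - 4*y*(kb*w)*(x+y+kb*w+ka) - 4*x*y*(kb*w))*e0
  have e11 : pderivSeries 1 (pderivSeries 1 u)
      = 3*hh*hh*u^5*(2*(kb - x*y - y*(kb*w) - x*(kb*w))*(-(x+kb*w)) - 4*x*(kb*w)*(x+y+kb*w+ka) - 4*x*y*(kb*w))^2 - hh*u^3*(2*(x+kb*w)^2 - 8*x*(kb*w)) := by
    linear_combination dd1 - 3*hh*u^2*(2*(kb - x*y - y*(kb*w) - x*(kb*w))*(-(x+kb*w)) - 4*x*(kb*w)*(x+y+kb*w+ka) - 4*x*y*(kb*w))*e1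
  simp only [D2op, pderiv_mul, pderiv_add, pderiv_C, pderiv_ofNat, map_mul, map_ofNat,
    mul_zero, zero_mul, add_zero, zero_add]
  simp only [← hx, ← hy, ← hw, ← hka, ← hkb]
  linear_combination
    (kb*w)*(x^3 + ka*x^2 + kb*x)*e00 + (kb*w)*(3*x^2 + 2*ka*x + kb)*e0 - (kb*w)*(y^3 + ka*y^2 + kb*y)*e11 - (kb*w)*(3*y^2 + 2*ka*y + kb)*e1
      + 2*hh*((kb*w)*hh*((x^3 + ka*x^2 + kb*x)*(2*(y+kb*w)^2 - 8*y*(kb*w)) - (y^3 + ka*y^2 + kb*y)*(2*(x+kb*w)^2 - 8*x*(kb*w)) + (3*x^2 + 2*ka*x + kb)*(2*(kb - x*y - y*(kb*w) - x*(kb*w))*(-(y+kb*w)) - 4*y*(kb*w)*(x+y+kb*w+ka) - 4*x*y*(kb*w)) - (3*y^2 + 2*ka*y + kb)*(2*(kb - x*y - y*(kb*w) - x*(kb*w))*(-(x+kb*w)) - 4*x*(kb*w)*(x+y+kb*w+ka) - 4*x*y*(kb*w)))*u^3 - (kb*w)*(x-y)*u*(2*hh*(u*u*((kb - x*y - y*(kb*w)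 - x*(kb*w))^2 - 4*x*y*(kb*w)*(x+y+kb*w+ka)))+1))*hu2 + ((kb*w)*hh*((x^3 + ka*x^2 + kb*x)*(2*(y+kb*w)^2 - 8*y*(kb*w)) - (y^3 + ka*y^2 + kb*y)*(2*(x+kb*w)^2 - 8*x*(kb*w)) + (3*x^2 + 2*ka*x + kb)*(2*(kb - x*y - y*(kb*w) - x*(kb*w))*(-(y+kb*w)) - 4*y*(kb*w)*(x+y+kb*w+ka) - 4*x*y*(kb*w)) - (3*y^2 + 2*ka*y + kb)*(2*(kb - x*y - y*(kb*w) - x*(kb*w))*(-(x+kb*w)) - 4*x*(kb*w)*(x+y+kb*w+ka) - 4*x*y*(kb*w)))*u^3 - (kb*w)*(x-y)*u*(2*hh*(u*u*((kb - x*y - y*(kb*w) - x*(kb*w))^2 - 4*x*y*(kb*w)*(x+y+kb*w+ka)))+1))*h2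
end
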